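/- Consider the block matrix A(α) = [[B, x, O],[yᵀ, α, wᵀ],[Oᵀ, z, C]] where B, C are square matrices and O zero blocks. If x is in the column space of B, yᵀ is in the row space of B, and z is not in the column space of C, then rank(A(α)) = rank(B) + rank([[0, wᵀ],[z, C]]), independent of α. -/

import Mathlib

open Matrix

section Aux

variable {F : Type*} [Field F]

lemma aux_rank_blockdiag {α β : Type*} [Fintype α] [Fintype β] [DecidableEq α] [DecidableEq β]
    (B : Matrix α α F) (D : Matrix β β F) :
    (fromBlocks B (0 : Matrix α β F) (0 : Matrix β α F) D).rank = B.rank + D.rank := by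
  classical
  let f₁ : (α → F) →ₗ[F] (α ⊕ β → F) :=
    { toFun := fun g => Sum.elim g 0
      map_add' := by intro a b; ext (i|i) <;> simp
      map_smul' := by intro c a; ext (i|i) <;> simp }
  let f₂ : (β → F) →ₗ[F] (α ⊕ β → F) :=
    { toFun := fun g => Sum.elim 0 g
      map_add' := by intro a b; ext (i|i) <;> simp
      map_smul' := by intro c a; ext (i|i) <;> simp }
  have hinj₁ : Function.Injective f₁ := by
    intro a b h; ext i; exact congrFun h (Sum.inl i)
  have hinj₂ : Function.Injective f₂ := by
    intro a b h; ext i; exact congrFun h (Sum.inr i)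
  have hrange : LinearMap.range (fromBlocks B 0 0 D).mulVecLin
      = (LinearMap.range B.mulVecLin).map f₁ ⊔ (LinearMap.range D.mulVecLin).map f₂ := by
    apply le_antisymm
    · rintro _ ⟨v, rfl⟩
      have h : (fromBlocks B 0 0 D).mulVecLin v
          = f₁ (B *ᵥ (v ∘ Sum.inl)) + f₂ (D *ᵥ (v ∘ Sum.inr)) := by
        ext (i|i) <;>
          simp [f₁, f₂, mulVecLin_apply, fromBlocks_mulVec]
      rw [h]
      exact Submodule.add_mem_sup (Submodule.mem_map_of_mem ⟨_, rfl⟩)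
        (Submodule.mem_map_of_mem ⟨_, rfl⟩)
    · apply sup_le
      · rintro _ ⟨_, ⟨v, rfl⟩, rfl⟩
        refine ⟨Sum.elim v 0, ?_⟩
        ext (i|i) <;>
          simp [f₁, mulVecLin_apply, fromBlocks_mulVec, Sum.elim_comp_inl, Sum.elim_comp_inr]
      · rintro _ ⟨_, ⟨v, rfl⟩, rfl⟩
        refine ⟨Sum.elim 0 v, ?_⟩
        ext (i|i) <;>
          simp [f₂, mulVecLin_apply, fromBlocks_mulVec, Sum.elim_comp_inl, Sum.elim_comp_inr]
  have hdisj : (LinearMap.range B.mulVecLin).map f₁ ⊓ (LinearMap.range D.mulVecLin).map f₂ = ⊥ := by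
    rw [eq_bot_iff]
    rintro v hv
    obtain ⟨hv₁, hv₂⟩ := Submodule.mem_inf.mp hv
    obtain ⟨g, _, hg⟩ := hv₁
    obtain ⟨h, _, hh⟩ := hv₂
    have : v = 0 := by
      ext (i|i)
      · have := congrFun hh (Sum.inl i); simp [f₂] at this; simp [← this]
      · have := congrFun hg (Sum.inr i); simp [f₁] at this; simp [← this]
    simp [this]
  have e₁ := (Submodule.equivMapOfInjective f₁ hinj₁ (LinearMap.range B.mulVecLin)).finrank_eq
  have e₂ := (Submodule.equivMapOfInjective f₂ hinj₂ (LinearMap.range D.mulVecLin)).finrank_eq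
  rw [Matrix.rank, hrange]
  have hfin := Submodule.finrank_sup_add_finrank_inf_eq
    ((LinearMap.range B.mulVecLin).map f₁) ((LinearMap.range D.mulVecLin).map f₂)
  rw [hdisj, finrank_bot, add_zero] at hfin
  rw [hfin, Matrix.rank, Matrix.rank, e₁, e₂]

lemma aux_exists_ann {k : ℕ} (C : Matrix (Fin k) (Fin k) F) {z : Fin k → F}
    (hz : z ∉ Submodule.span F (Set.range Cᵀ)) (t : F) :
    ∃ lam : Fin k → F, lam ᵥ* C = 0 ∧ lam ⬝ᵥ z = t := by
  obtain ⟨f, hfz, hmap⟩ :=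
    Submodule.exists_dual_map_eq_bot_of_notMem hz inferInstance
  have hsingle : ∀ (i : Fin k) (c : F), (Pi.single i c : Fin k → F) = c • (Pi.single i 1 : Fin k → F) := by
    intro i c; ext j; by_cases h : j = i <;> simp [Pi.single_apply, h]
  have key : ∀ v : Fin k → F, (fun i => f (Pi.single i 1)) ⬝ᵥ v = f v := by
    intro v
    have hv : v = ∑ i, (Pi.single i (v i) : Fin k → F) := (Finset.univ_sum_single v).symm
    conv_rhs => rw [hv]
    rw [map_sum]
    have hterm : ∀ i, f (Pi.single i (v i)) = v i * f (Pi.single i 1) := by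
      intro i
      rw [hsingle i (v i), _root_.map_smul, smul_eq_mul]
    simp only [hterm]
    rw [dotProduct]
    exact Finset.sum_congr rfl fun i _ => mul_comm _ _
  have hann : ∀ v ∈ Submodule.span F (Set.range Cᵀ), f v = 0 := by
    intro v hv
    have : f v ∈ (Submodule.span F (Set.range Cᵀ)).map f := ⟨v, hv, rfl⟩
    rwa [hmap, Submodule.mem_bot] at this
  refine ⟨fun i => (t / f z) * f (Pi.single i 1), ?_, ?_⟩
  · ext j
    have hcol : (fun i => f (Pi.single i 1)) ⬝ᵥ (fun i => C i j) = 0 := by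
      rw [key]
      exact hann _ (Submodule.subset_span ⟨j, rfl⟩)
    simp only [vecMul, dotProduct, Pi.zero_apply] at hcol ⊢
    calc ∑ i, (t / f z * f (Pi.single i 1)) * C i j
        = (t / f z) * ∑ i, f (Pi.single i 1) * C i j := by
          rw [Finset.mul_sum]; congr 1; ext i; ring
      _ = 0 := by rw [hcol]; ring
  · have h1 : (fun i => (t / f z) * f (Pi.single i 1)) ⬝ᵥ z
        = (t / f z) * ((fun i => f (Pi.single i 1)) ⬝ᵥ z) := by
      simp [dotProduct, Finset.mul_sum, mul_assoc]
    rw [h1, key, div_mul_cancel₀ _ hfz]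

end Aux

/-- A(α) = [[B, x, 0],[yᵀ, α, wᵀ],[0, z, C]]. If x ∈ colspace(B),
yᵀ ∈ rowspace(B), and z ∉ colspace(C), then rank(A(α)) = rank(B) + rank([[0, wᵀ],[z, C]]),
independent of α. -/
theorem stmt_9 {F : Type*} [Field F] {m k : ℕ}
    (B : Matrix (Fin m) (Fin m) F) (C : Matrix (Fin k) (Fin k) F)
    (x y : Fin m → F) (w z : Fin k → F)
    (A : F → Matrix (Fin m ⊕ (Fin 1 ⊕ Fin k)) (Fin m ⊕ (Fin 1 ⊕ Fin k)) F)
    (D : Matrix (Fin 1 ⊕ Fin k) (Fin 1 ⊕ Fin k) F)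
    (hD : D = Matrix.fromBlocks (Matrix.of fun (_ : Fin 1) (_ : Fin 1) => (0 : F))
      (Matrix.of fun (_ : Fin 1) j => w j) (Matrix.of fun i (_ : Fin 1) => z i) C)
    (hA : ∀ α : F, A α = Matrix.fromBlocks B
      (Matrix.of fun i j => Sum.elim (fun (_ : Fin 1) => x i) (fun (_ : Fin k) => (0 : F)) j)
      (Matrix.of fun i j => Sum.elim (fun (_ : Fin 1) => y j) (fun (_ : Fin k) => (0 : F)) i)
      (Matrix.fromBlocks (Matrix.of fun (_ : Fin 1) (_ : Fin 1) => α)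
        (Matrix.of fun (_ : Fin 1) j => w j) (Matrix.of fun i (_ : Fin 1) => z i) C))
    (hx : x ∈ Submodule.span F (Set.range Bᵀ))
    (hy : y ∈ Submodule.span F (Set.range B))
    (hz : z ∉ Submodule.span F (Set.range Cᵀ)) :
    ∀ α : F, (A α).rank = B.rank + D.rank := by
  intro α
  classical
  rw [show Bᵀ = B.col from rfl, ← Matrix.range_mulVecLin] at hx
  obtain ⟨u, hu⟩ := hx
  rw [mulVecLin_apply] at hu
  have hy' : y ∈ LinearMap.range (Bᵀ).mulVecLin := by
    rw [Matrix.range_mulVecLin]; exact hy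
  obtain ⟨v, hv⟩ := hy'
  rw [mulVecLin_apply, Matrix.mulVec_transpose] at hv
  set β : F := α - y ⬝ᵥ u with hβ
  obtain ⟨lam, hlamC, hlamz⟩ := aux_exists_ann C hz β
  set Dβ : Matrix (Fin 1 ⊕ Fin k) (Fin 1 ⊕ Fin k) F :=
    Matrix.fromBlocks (Matrix.of fun (_ : Fin 1) (_ : Fin 1) => β)
      (Matrix.of fun (_ : Fin 1) j => w j) (Matrix.of fun i (_ : Fin 1) => z i) C with hDβ
  set N : Matrix (Fin m) (Fin 1 ⊕ Fin k) F :=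
    Matrix.of fun i j => Sum.elim (fun (_ : Fin 1) => u i) (fun (_ : Fin k) => (0 : F)) j with hN
  set M : Matrix (Fin 1 ⊕ Fin k) (Fin m) F :=
    Matrix.of fun i j => Sum.elim (fun (_ : Fin 1) => v j) (fun (_ : Fin k) => (0 : F)) i with hM
  set X : Matrix (Fin m) (Fin 1 ⊕ Fin k) F :=
    Matrix.of fun i j => Sum.elim (fun (_ : Fin 1) => x i) (fun (_ : Fin k) => (0 : F)) j with hX
  set Y : Matrix (Fin 1 ⊕ Fin k) (Fin m) F :=
    Matrix.of fun i j => Sum.elim (fun (_ : Fin 1) => y j) (fun (_ : Fin k) => (0 : F)) i with hY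
  have hBN : B * N = X := by
    ext i j
    rcases j with j | j
    · simpa [Matrix.mul_apply, hN, hX, Matrix.mulVec, dotProduct] using congrFun hu i
    · simp [Matrix.mul_apply, hN, hX]
  have hMB : M * B = Y := by
    ext i j
    rcases i with i | i
    · simpa [Matrix.mul_apply, hM, hY, Matrix.vecMul, dotProduct] using congrFun hv j
    · simp [Matrix.mul_apply, hM, hY]
  have hYN : Y * N = Matrix.fromBlocks (Matrix.of fun (_ : Fin 1) (_ : Fin 1) => y ⬝ᵥ u)
      0 0 0 := by
    ext i j
    rcases i with i | i <;> rcases j with j | j <;>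
      simp [Matrix.mul_apply, hY, hN, dotProduct]
  have h4 : Y * N + Dβ = Matrix.fromBlocks (Matrix.of fun (_ : Fin 1) (_ : Fin 1) => α)
      (Matrix.of fun (_ : Fin 1) j => w j) (Matrix.of fun i (_ : Fin 1) => z i) C := by
    rw [hYN, hDβ, Matrix.fromBlocks_add]
    ext i j
    rcases i with i | i <;> rcases j with j | j <;>
      simp only [Matrix.fromBlocks_apply₁₁, Matrix.fromBlocks_apply₁₂, Matrix.fromBlocks_apply₂₁,
        Matrix.fromBlocks_apply₂₂, Matrix.add_apply, Matrix.of_apply, Matrix.zero_apply,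
        zero_add, hβ] <;>
      ring
  have key : A α = (fromBlocks 1 0 M 1) * (fromBlocks B 0 0 Dβ) * (fromBlocks 1 N 0 1) := by
    rw [hA α, Matrix.fromBlocks_multiply, Matrix.fromBlocks_multiply]
    simp only [Matrix.one_mul, Matrix.mul_one, Matrix.zero_mul, Matrix.mul_zero,
      add_zero, zero_add]
    rw [hBN, hMB, h4]
  have hdet₁ : IsUnit (fromBlocks (1 : Matrix (Fin m) (Fin m) F) 0 M 1).det := by
    rw [Matrix.det_fromBlocks_zero₁₂, Matrix.det_one, Matrix.det_one, one_mul]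
    exact isUnit_one
  have hdet₂ : IsUnit (fromBlocks (1 : Matrix (Fin m) (Fin m) F) N 0 1).det := by
    rw [Matrix.det_fromBlocks_zero₂₁, Matrix.det_one, Matrix.det_one, one_mul]
    exact isUnit_one
  have hr1 : (A α).rank = (fromBlocks B 0 0 Dβ).rank := by
    rw [key, Matrix.rank_mul_eq_left_of_isUnit_det _ _ hdet₂,
      Matrix.rank_mul_eq_right_of_isUnit_det _ _ hdet₁]
  have hr2 : Dβ.rank = D.rank := by
    set Λ : Matrix (Fin 1) (Fin k) F := Matrix.of fun _ j => lam j with hΛ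
    have hLD : (fromBlocks 1 Λ 0 1) * D = Dβ := by
      rw [hD, Matrix.fromBlocks_multiply]
      simp only [Matrix.one_mul, Matrix.mul_one, Matrix.zero_mul, Matrix.mul_zero,
        add_zero, zero_add]
      rw [hDβ]
      ext i j
      rcases i with i|i <;> rcases j with j|j <;>
        simp only [Matrix.fromBlocks_apply₁₁, Matrix.fromBlocks_apply₁₂,
          Matrix.fromBlocks_apply₂₁, Matrix.fromBlocks_apply₂₂, Matrix.add_apply,
          Matrix.of_apply, Matrix.mul_apply, Matrix.zero_apply, hΛ]
      · simpa [dotProduct, hβ] using hlamz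
      · have h0 := congrFun hlamC j
        simp only [Matrix.vecMul, dotProduct, Pi.zero_apply] at h0
        simp [h0]
    have hdetL : IsUnit (fromBlocks (1 : Matrix (Fin 1) (Fin 1) F) Λ 0 1).det := by
      rw [Matrix.det_fromBlocks_zero₂₁, Matrix.det_one, Matrix.det_one, one_mul]
      exact isUnit_one
    rw [← hLD, Matrix.rank_mul_eq_right_of_isUnit_det _ _ hdetL]
  rw [hr1, aux_rank_blockdiag, hr2]
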